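/- arXiv:1910.00904 — 3 statements merged into one kernel-verified Lean document; each statement's English description precedes it below -/
import Mathlib

section
/- Let L/K be a finite extension of fields and V a finite-dimensional L-vector space. For every L-linear endomorphism f of V, the determinant of f viewed as a K-linear endomorphism of V equals N_{L/K}(det_L f), the field norm from L to K of the determinant of f as an L-linear endomorphism. -/
open Matrix Polynomial

/-- Determinant of `1 + N` is `1` when `N * N = 0`, over a field. -/
private lemma det_one_add_of_sq_eq_zero {m R : Type*} [Fintype m] [DecidableEq m] [Field R]
    (N : Matrix m m R) (hN : N * N = 0) : (1 + N).det = 1 := by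
  have hnil : IsNilpotent (-N) := ⟨2, by simp [pow_two, hN]⟩
  have hu := Matrix.isUnit_charpolyRev_of_isNilpotent hnil
  obtain ⟨r, hr, hp⟩ := Polynomial.isUnit_iff.mp hu
  have h0 := Matrix.eval_charpolyRev (M := -N)
  rw [← hp, eval_C] at h0
  have h1 : Matrix.charpolyRev (-N) = 1 := by rw [← hp, h0, Polynomial.C_1]
  have h2 := congrArg (Polynomial.eval 1) h1
  rw [Matrix.charpolyRev, ← Polynomial.coe_evalRingHom, RingHom.map_det,
    _root_.map_one] at h2
  rw [← h2]
  congr 1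
  ext i j
  rcases eq_or_ne i j with rfl | hij
  · simp [Matrix.map_apply, Matrix.one_apply]
  · simp [Matrix.map_apply, Matrix.one_apply, hij]

/-- Key matrix lemma: the determinant over `K` of the big block matrix obtained from an
`L`-matrix `A` by replacing each entry by its left-multiplication matrix equals the norm of
the determinant of `A`. -/
private lemma det_comp_leftMulMatrix {K L ι κ : Type*} [Field K] [Field L] [Algebra K L]
    [Fintype ι] [DecidableEq ι] [Fintype κ] [DecidableEq κ] (bK : Module.Basis ι K L)
    (A : Matrix κ κ L) :
    ((Matrix.compRingEquiv κ ι K) (A.map (Algebra.leftMulMatrix bK))).det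
      = Algebra.norm K A.det := by
  apply Matrix.diagonal_transvection_induction
    (P := fun M : Matrix κ κ L =>
      ((Matrix.compRingEquiv κ ι K) (M.map (Algebra.leftMulMatrix bK))).det
        = Algebra.norm K M.det)
  · intro D _
    have hblock : (Matrix.compRingEquiv κ ι K) ((Matrix.diagonal D).map
        (Algebra.leftMulMatrix bK))
        = (Matrix.blockDiagonal fun i => Algebra.leftMulMatrix bK (D i)).submatrix
            (Equiv.prodComm κ ι) (Equiv.prodComm κ ι) := by
      ext ⟨i, a⟩ ⟨j, b⟩
      rcases eq_or_ne i j with rfl | hij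
      · show Algebra.leftMulMatrix bK (Matrix.diagonal D i i) a b = _
        simp [Matrix.compRingEquiv_apply, Matrix.comp,
          Matrix.map_apply, Matrix.blockDiagonal_apply, Equiv.coe_fn_mk]
      · show Algebra.leftMulMatrix bK (Matrix.diagonal D i j) a b = _
        simp [Matrix.compRingEquiv_apply, Matrix.comp,
          Matrix.map_apply, Matrix.diagonal_apply_ne _ hij,
          Matrix.blockDiagonal_apply, hij, Equiv.coe_fn_mk]
    rw [hblock, Matrix.det_submatrix_equiv_self, Matrix.det_blockDiagonal,
      Matrix.det_diagonal, map_prod]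
    exact Finset.prod_congr rfl fun i _ => (Algebra.norm_eq_matrix_det bK (D i)).symm
  · intro t
    rw [Matrix.TransvectionStruct.det, _root_.map_one]
    have : t.toMatrix = 1 + Matrix.single t.i t.j t.c := rfl
    rw [this]
    set E : Matrix κ κ L := Matrix.single t.i t.j t.c with hE
    have hE2 : E * E = 0 := Matrix.single_mul_single_of_ne (i := t.i) (j := t.j) (k := t.i) (h := t.hij.symm) (d := t.c) (c := t.c)
    set ψ : Matrix κ κ L →+* Matrix (κ × ι) (κ × ι) K :=
      (Matrix.compRingEquiv κ ι K : Matrix κ κ (Matrix ι ι K) ≃+* _).toRingHom.comp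
        ((Algebra.leftMulMatrix bK).toRingHom.mapMatrix) with hψ
    have key : ∀ M : Matrix κ κ L,
        (Matrix.compRingEquiv κ ι K) (M.map (Algebra.leftMulMatrix bK)) = ψ M := fun M => rfl
    rw [key, map_add, _root_.map_one]
    refine det_one_add_of_sq_eq_zero _ ?_
    rw [← _root_.map_mul, hE2, map_zero]
  · intro A B hA hB
    set ψ : Matrix κ κ L →+* Matrix (κ × ι) (κ × ι) K :=
      (Matrix.compRingEquiv κ ι K : Matrix κ κ (Matrix ι ι K) ≃+* _).toRingHom.comp
        ((Algebra.leftMulMatrix bK).toRingHom.mapMatrix) with hψ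
    have key : ∀ M : Matrix κ κ L,
        (Matrix.compRingEquiv κ ι K) (M.map (Algebra.leftMulMatrix bK)) = ψ M := fun M => rfl
    rw [key] at hA hB ⊢
    rw [_root_.map_mul, Matrix.det_mul, hA, hB, Matrix.det_mul, _root_.map_mul]

/-- The matrix of `f.restrictScalars K` in the basis `bK.smulTower bV`. -/
private lemma toMatrix_restrictScalars_smulTower {K L V ι κ : Type*}
    [Field K] [Field L] [Algebra K L] [AddCommGroup V] [Module L V]
    [Module K V] [IsScalarTower K L V]
    [Fintype ι] [DecidableEq ι] [Fintype κ] [DecidableEq κ]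
    (bK : Module.Basis ι K L) (bV : Module.Basis κ L V) (f : V →ₗ[L] V) (ik jk) :
    LinearMap.toMatrix (bK.smulTower bV) (bK.smulTower bV) (f.restrictScalars K) ik jk
      = Algebra.leftMulMatrix bK (LinearMap.toMatrix bV bV f ik.2 jk.2) ik.1 jk.1 := by
  obtain ⟨a, i⟩ := ik
  obtain ⟨b, j⟩ := jk
  rw [LinearMap.toMatrix_apply, Module.Basis.smulTower_apply, Module.Basis.smulTower_repr,
    LinearMap.restrictScalars_apply, LinearMap.map_smul, LinearEquiv.map_smul,
    Finsupp.smul_apply, smul_eq_mul, Algebra.leftMulMatrix_eq_repr_mul,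
    LinearMap.toMatrix_apply, mul_comm]

theorem det_restrictScalars_eq_norm_det
    (K L V : Type*) [Field K] [Field L] [Algebra K L] [FiniteDimensional K L]
    [AddCommGroup V] [Module L V] [FiniteDimensional L V]
    [Module K V] [IsScalarTower K L V]
    (f : V →ₗ[L] V) :
    LinearMap.det (f.restrictScalars K) = Algebra.norm K (LinearMap.det f) := by
  classical
  let bK : Module.Basis (Fin (Module.finrank K L)) K L := Module.finBasis K L
  let bV : Module.Basis (Fin (Module.finrank L V)) L V := Module.finBasis L V
  let B := bK.smulTower bV
  rw [← LinearMap.det_toMatrix B (f.restrictScalars K), ← LinearMap.det_toMatrix bV f]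
  set A := LinearMap.toMatrix bV bV f with hA
  have hM : LinearMap.toMatrix B B (f.restrictScalars K)
      = ((Matrix.compRingEquiv _ _ K) (A.map (Algebra.leftMulMatrix bK))).submatrix
          (Equiv.prodComm _ _) (Equiv.prodComm _ _) := by
    ext ik jk
    rw [toMatrix_restrictScalars_smulTower bK bV f]
    rfl
  rw [hM, Matrix.det_submatrix_equiv_self]
  exact det_comp_leftMulMatrix bK A
end

section
/- Let S be a finite set of primes and A ∈ GL_m(ℤ[1/S]), and suppose that for every p ∈ S and a fixed embedding ℚ̄ ↪ ℂ_p, every eigenvalue λ of A satisfies |λ|_p ≠ 1. Then ℤ[1/S]^m, regarded as a module over ℤ[t^{±1}] with t acting as A, is a finitely generated ℤ[t^{±1}]-module; moreover, for every p ∈ S the Pontryagin dual X = Σ_S^m = (ℤ[1/S]^m)^∧ has bounded p-torsion (i.e. the ℤ-action on Σ_S^m induced by A is p-adically expansive). -/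
open Polynomial

/-- The ring ℤ[1/S] of S-integers of ℚ: the subring of ℚ generated by the
inverses of the primes in S (it automatically contains ℤ). -/
def ZinvS (S : Finset ℕ) : Subring ℚ :=
  Subring.closure {x : ℚ | ∃ l ∈ S, x = (l : ℚ)⁻¹}

/-- An invertible matrix over a commutative ring `R`, viewed as an invertible
additive (ℤ-linear) endomorphism of `Fin m → R`. -/
noncomputable def matUnitEnd {R : Type*} [CommRing R] {m : ℕ}
    (A : (Matrix (Fin m) (Fin m) R)ˣ) : (Module.End ℤ (Fin m → R))ˣ :=
  Units.map
    { toFun := fun B : Matrix (Fin m) (Fin m) R => (Matrix.mulVecLin B).restrictScalars ℤ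
      map_one' := by ext x; simp
      map_mul' := fun B C => by ext x; simp [Matrix.mulVecLin_mul] } A

/-- The ℤ[t^{±1}] = ℤ[ℤ]-module structure on `Fin m → R` in which `t` acts as an
invertible matrix `A`, i.e. `(∑ cᵢ tⁱ) • x = ∑ cᵢ Aⁱ x`.  Here ℤ[t^{±1}] is
represented as the group algebra `AddMonoidAlgebra ℤ ℤ`. -/
noncomputable def laurentModule {R : Type*} [CommRing R] {m : ℕ}
    (A : (Matrix (Fin m) (Fin m) R)ˣ) : Module (AddMonoidAlgebra ℤ ℤ) (Fin m → R) :=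
  Module.compHom (Fin m → R)
    ((AddMonoidAlgebra.lift ℤ (Module.End ℤ (Fin m → R)) ℤ)
      ((Units.coeHom _).comp ((zpowersHom _) (matUnitEnd A)))).toRingHom

/-!
STATEMENT 6: Let S be a finite set of primes and A ∈ GL_m(ℤ[1/S]); fix, for each
p ∈ S, an embedding ℚ̄ ↪ ℂ_p, and suppose every eigenvalue λ of A (i.e. every
root in ℚ̄ of its characteristic polynomial) satisfies |λ|_p ≠ 1 for all p ∈ S.
Then:
1. ℤ[1/S]^m, as a ℤ[t^{±1}]-module with t acting as A, is finitely generated;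
2. for every p ∈ S, the Pontryagin dual X = Σ_S^m = (ℤ[1/S]^m)^∧ has bounded
   p-torsion — i.e. the ℤ-action on Σ_S^m is p-adically expansive.

The embedding ℚ̄ ↪ ℂ_p is recorded by the nonarchimedean multiplicative absolute
value w_p : ℚ̄ → ℝ it induces, extending the p-adic absolute value of ℚ.  The
Pontryagin dual of the discrete group ℤ[1/S]^m is realized as the group of group
homomorphisms ℤ[1/S]^m →+ ℝ/ℤ (all of which are continuous since the domain is
discrete).
-/

section W
variable {F : Type*} [Field F] (w : F → ℝ)
  (h0 : ∀ x, 0 ≤ w x)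
  (hm : ∀ x y, w (x * y) = w x * w y)
  (ha : ∀ x y, w (x + y) ≤ max (w x) (w y))
  (h1 : w 1 = 1) (hz : w 0 = 0)

include hm h1 h0 in
lemma w_neg : ∀ x, w (-x) = w x := by
  have hn1 : w (-1) = 1 := by
    have : w (-1) * w (-1) = 1 := by rw [← hm]; simpa using h1
    nlinarith [h0 (-1)]
  intro x
  have : (-x) = -1 * x := by ring
  rw [this, hm, hn1, one_mul]

include hm h1 h0 ha in
lemma w_add_eq_left {x y : F} (h : w y < w x) : w (x + y) = w x := by
  have hle : w (x + y) ≤ w x := le_trans (ha x y) (by simp [le_of_lt h])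
  have h2 : w x ≤ max (w (x + y)) (w y) := by
    have : x = (x + y) + (-y) := by ring
    calc w x = w ((x + y) + (-y)) := by rw [← this]
    _ ≤ max (w (x + y)) (w (-y)) := ha _ _
    _ = max (w (x + y)) (w y) := by rw [w_neg w h0 hm h1]
  rcases max_cases (w (x+y)) (w y) with ⟨he, _⟩ | ⟨he, _⟩
  · exact le_antisymm hle (he ▸ h2)
  · linarith [he ▸ h2]

include h0 hm ha h1 hz in
lemma coeff_prod_X_sub_C_w
    (s : Multiset F) [DecidablePred (fun a : F => 1 < w a)]
    (hs : ∀ x ∈ s, w x ≠ 1) :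
    1 ≤ ((s.filter (fun a => 1 < w a)).map w).prod ∧
    w (((s.map (fun a => X - C a)).prod).coeff
        (Multiset.card s - Multiset.card (s.filter (fun a => 1 < w a)))) =
      ((s.filter (fun a => 1 < w a)).map w).prod ∧
    ∀ i : ℕ, i ≠ Multiset.card s - Multiset.card (s.filter (fun a => 1 < w a)) →
      w (((s.map (fun a => X - C a)).prod).coeff i) <
        ((s.filter (fun a => 1 < w a)).map w).prod := by
  induction s using Multiset.induction with
  | empty =>
      refine ⟨by simp, by simpa using h1, ?_⟩
      intro i hi
      simp only [Multiset.map_zero, Multiset.prod_zero, Multiset.filter_zero]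
      simp only [Multiset.card_zero, Multiset.filter_zero] at hi
      rw [Polynomial.coeff_one, if_neg (by omega)]
      simp [hz]
  | cons a t ih =>
      obtain ⟨hP', heq', hlt'⟩ := ih (fun x hx => hs x (Multiset.mem_cons_of_mem hx))
      set g' : F[X] := (t.map (fun a => X - C a)).prod with hg'
      set k' := Multiset.card (t.filter (fun a => 1 < w a)) with hk'
      set P' := ((t.filter (fun a => 1 < w a)).map w).prod with hP'def
      have hP'pos : (0:ℝ) < P' := lt_of_lt_of_le one_pos hP'
      have hkle : k' ≤ Multiset.card t := by
        rw [hk']; exact Multiset.card_le_card (Multiset.filter_le _ _)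
      have hle' : ∀ i, w (g'.coeff i) ≤ P' := by
        intro i
        rcases eq_or_ne i (Multiset.card t - k') with h | h
        · rw [h, heq']
        · exact le_of_lt (hlt' i h)
      have hgcons : ((a ::ₘ t).map (fun a => X - C a)).prod = (X - C a) * g' := by
        rw [Multiset.map_cons, Multiset.prod_cons]
      have hcoeff : ∀ i : ℕ, ((X - C a) * g').coeff i =
          (if i = 0 then 0 else g'.coeff (i - 1)) - a * g'.coeff i := by
        intro i
        rw [sub_mul, Polynomial.coeff_sub, Polynomial.coeff_C_mul]
        cases i with
        | zero => simp
        | succ n => simp [Polynomial.coeff_X_mul]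
      have hwa := hs a (Multiset.mem_cons_self a t)
      rcases lt_or_gt_of_ne hwa with hsmall | hbig
      · -- w a < 1
        have hfilter : (a ::ₘ t).filter (fun a => 1 < w a) = t.filter (fun a => 1 < w a) :=
          Multiset.filter_cons_of_neg _ (by simpa using le_of_lt hsmall)
        have hcards : Multiset.card (a ::ₘ t) - Multiset.card ((a ::ₘ t).filter (fun a => 1 < w a))
            = (Multiset.card t - k') + 1 := by
          rw [hfilter, Multiset.card_cons, ← hk']; omega
        refine ⟨by rw [hfilter]; exact hP', ?_, ?_⟩
        · rw [hgcons, hcards, hfilter, hcoeff, if_neg (by omega)]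
          have : ((Multiset.card t - k') + 1) - 1 = Multiset.card t - k' := by omega
          rw [this]
          have hy : w (-(a * g'.coeff (Multiset.card t - k' + 1))) < w (g'.coeff (Multiset.card t - k')) := by
            rw [w_neg w h0 hm h1, hm, heq']
            have := hlt' (Multiset.card t - k' + 1) (by omega)
            calc w a * w (g'.coeff (Multiset.card t - k' + 1)) ≤ 1 * w (g'.coeff (Multiset.card t - k' + 1)) := by
                  nlinarith [h0 (g'.coeff (Multiset.card t - k' + 1)), le_of_lt hsmall]
            _ < P' := by simpa using this
          rw [sub_eq_add_neg, w_add_eq_left w h0 hm ha h1 hy, heq']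
        · intro i hi
          rw [hcards] at hi
          rw [hgcons, hfilter, hcoeff]
          have hb : w (a * g'.coeff i) < P' := by
            rw [hm]
            calc w a * w (g'.coeff i) ≤ w a * P' := by nlinarith [h0 a, hle' i, le_of_lt hsmall]
            _ < 1 * P' := by nlinarith
            _ = P' := one_mul _
          rcases Nat.eq_zero_or_pos i with h0i | h0i
          · rw [h0i]; rw [if_pos rfl, zero_sub]
            rw [w_neg w h0 hm h1]
            simpa [h0i] using hb
          · rw [if_neg (by omega)]
            have h1' : w (g'.coeff (i-1)) < P' := hlt' (i-1) (by omega)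
            calc w (g'.coeff (i-1) - a * g'.coeff i)
                ≤ max (w (g'.coeff (i-1))) (w (-(a * g'.coeff i))) := by
                  rw [sub_eq_add_neg]; exact ha _ _
            _ < P' := by rw [w_neg w h0 hm h1]; exact max_lt h1' hb
      · -- 1 < w a
        have hfilter : (a ::ₘ t).filter (fun a => 1 < w a) = a ::ₘ t.filter (fun a => 1 < w a) :=
          Multiset.filter_cons_of_pos _ (by simpa using hbig)
        have hPnew : (((a ::ₘ t).filter (fun a => 1 < w a)).map w).prod = w a * P' := by
          rw [hfilter, Multiset.map_cons, Multiset.prod_cons]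
        have hcards : Multiset.card (a ::ₘ t) - Multiset.card ((a ::ₘ t).filter (fun a => 1 < w a))
            = Multiset.card t - k' := by
          rw [hfilter, Multiset.card_cons, Multiset.card_cons, ← hk']; omega
        have hP'lt : P' < w a * P' := by nlinarith
        refine ⟨by rw [hPnew]; nlinarith, ?_, ?_⟩
        · rw [hgcons, hcards, hPnew, hcoeff]
          have hdom : w (-(a * g'.coeff (Multiset.card t - k'))) = w a * P' := by
            rw [w_neg w h0 hm h1, hm, heq']
          rcases Nat.eq_zero_or_pos (Multiset.card t - k') with h0i | h0i
          · rw [h0i] at hdom ⊢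
            rw [if_pos rfl, zero_sub]
            rw [w_neg w h0 hm h1, hm, ← h0i, heq']
          · rw [if_neg (by omega)]
            have hsm : w (g'.coeff (Multiset.card t - k' - 1)) < w a * P' :=
              lt_of_lt_of_le (hlt' _ (by omega)) (le_of_lt hP'lt)
            rw [sub_eq_add_neg, add_comm, w_add_eq_left w h0 hm ha h1 (by rw [hdom]; exact hsm), hdom]
        · intro i hi
          rw [hcards] at hi
          rw [hgcons, hPnew, hcoeff]
          have hb : w (a * g'.coeff i) < w a * P' := by
            rw [hm]
            have : w (g'.coeff i) < P' := hlt' i hi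
            nlinarith [h0 a]
          rcases Nat.eq_zero_or_pos i with h0i | h0i
          · rw [h0i]; rw [if_pos rfl, zero_sub]
            rw [w_neg w h0 hm h1]
            simpa [h0i] using hb
          · rw [if_neg (by omega)]
            have h1' : w (g'.coeff (i-1)) ≤ P' := hle' (i-1)
            calc w (g'.coeff (i-1) - a * g'.coeff i)
                ≤ max (w (g'.coeff (i-1))) (w (-(a * g'.coeff i))) := by
                  rw [sub_eq_add_neg]; exact ha _ _
            _ < w a * P' := by
                  rw [w_neg w h0 hm h1]
                  exact max_lt (lt_of_le_of_lt h1' hP'lt) hb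
end W


lemma padic_num_den {p : ℕ} (hp : p.Prime) (q : ℚ) (h : padicNorm p q < 1) :
    (p:ℤ) ∣ q.num ∧ ¬ (p:ℤ) ∣ (q.den:ℤ) := by
  haveI : Fact p.Prime := ⟨hp⟩
  have hden0 : ((q.den:ℚ)) ≠ 0 := by exact_mod_cast q.den_nz
  have hsplit : padicNorm p q = padicNorm p (q.num:ℚ) / padicNorm p (q.den:ℚ) := by
    conv_lhs => rw [← Rat.num_div_den q]
    exact padicNorm.div _ _
  have hnotboth : ¬ ((p:ℤ) ∣ q.num ∧ (p:ℤ) ∣ (q.den:ℤ)) := by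
    rintro ⟨h1, h2⟩
    have hn : p ∣ q.num.natAbs := by
      have := Int.natAbs_dvd_natAbs.mpr h1; simpa using this
    have hd : p ∣ q.den := by exact_mod_cast h2
    have : p ∣ Nat.gcd q.num.natAbs q.den := Nat.dvd_gcd hn hd
    rw [q.reduced] at this
    exact hp.one_lt.ne' (Nat.dvd_one.mp this)
  have hden : ¬ (p:ℤ) ∣ (q.den:ℤ) := by
    intro hd
    have hnum : ¬ (p:ℤ) ∣ q.num := fun hn => hnotboth ⟨hn, hd⟩
    have h1 : padicNorm p (q.num:ℚ) = 1 := by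
      have := (padicNorm.int_eq_one_iff (p := p) q.num).mpr hnum
      simpa using this
    have h2 : padicNorm p ((q.den:ℤ):ℚ) ≤ 1 := padicNorm.of_int _
    have h3 : (0:ℚ) < padicNorm p ((q.den:ℤ):ℚ) := by
      have := padicNorm.nonzero (p := p) (q := ((q.den:ℤ):ℚ)) (by exact_mod_cast q.den_nz)
      have h4 := padicNorm.nonneg (p := p) ((q.den:ℤ):ℚ)
      rcases lt_or_eq_of_le h4 with h5 | h5
      · exact h5
      · exact absurd h5.symm this
    rw [hsplit] at h
    push_cast at h h2 h3
    rw [h1] at h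
    have : (1:ℚ) < padicNorm p (q.den:ℚ) := by
      by_contra hcon
      push_neg at hcon
      have := (div_lt_one h3).mp h
      linarith
    linarith
  refine ⟨?_, hden⟩
  have h1 : padicNorm p ((q.den:ℤ):ℚ) = 1 := (padicNorm.int_eq_one_iff (p := p) _).mpr hden
  push_cast at h1
  rw [hsplit, h1, div_one] at h
  have := (padicNorm.int_lt_one_iff (p := p) q.num).mp (by push_cast; exact h)
  exact this

lemma coe_zsmul_ZinvS {S : Finset ℕ} (n : ℤ) (x : ZinvS S) :
    ((n • x : ZinvS S) : ℚ) = (n : ℚ) * (x : ℚ) := by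
  have := map_zsmul ((ZinvS S).subtype) n x
  simpa [zsmul_eq_mul] using this

lemma ZinvS_struct (S : Finset ℕ) (hS : ∀ l ∈ S, l.Prime) (x : ℚ) (hx : x ∈ ZinvS S) :
    ∃ (n : ℤ) (K : ℕ), x * ((∏ l ∈ S, (l:ℕ) : ℕ) : ℚ) ^ K = (n : ℚ) := by
  induction hx using Subring.closure_induction with
  | mem y hy =>
      obtain ⟨l, hl, rfl⟩ := hy
      refine ⟨(∏ l' ∈ S.erase l, (l':ℕ) : ℕ), 1, ?_⟩
      have hl0 : ((l:ℕ):ℚ) ≠ 0 := Nat.cast_ne_zero.mpr (hS l hl).pos.ne'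
      rw [pow_one, ← Finset.mul_prod_erase _ _ hl]
      push_cast
      field_simp
  | zero => exact ⟨0, 0, by simp⟩
  | one => exact ⟨1, 0, by simp⟩
  | add a b _ _ iha ihb =>
      obtain ⟨n1, K1, h1⟩ := iha
      obtain ⟨n2, K2, h2⟩ := ihb
      refine ⟨n1 * ((∏ l ∈ S, (l:ℕ) : ℕ) : ℤ) ^ K2 + n2 * ((∏ l ∈ S, (l:ℕ) : ℕ) : ℤ) ^ K1,
        K1 + K2, ?_⟩
      push_cast at h1 h2 ⊢
      rw [pow_add]
      linear_combination ((∏ i ∈ S, (i:ℚ)) ^ K2) * h1 + ((∏ i ∈ S, (i:ℚ)) ^ K1) * h2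
  | neg a _ iha =>
      obtain ⟨n1, K1, h1⟩ := iha
      refine ⟨-n1, K1, by push_cast at h1 ⊢; linear_combination -h1⟩
  | mul a b _ _ iha ihb =>
      obtain ⟨n1, K1, h1⟩ := iha
      obtain ⟨n2, K2, h2⟩ := ihb
      refine ⟨n1 * n2, K1 + K2, ?_⟩
      push_cast at h1 h2 ⊢
      rw [pow_add]
      linear_combination (b * (∏ i ∈ S, (i:ℚ)) ^ K2) * h1 + (n1:ℚ) * h2


section ModLemmas
variable {R : Type*} [CommRing R] {m : ℕ} (A : (Matrix (Fin m) (Fin m) R)ˣ)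

lemma laurent_single_smul (n : ℤ) (c : ℤ) (x : Fin m → R) :
    letI := laurentModule A
    (AddMonoidAlgebra.single n c : AddMonoidAlgebra ℤ ℤ) • x
      = c • (((matUnitEnd A) ^ n : (Module.End ℤ (Fin m → R))ˣ) : Module.End ℤ (Fin m → R)) x := by
  letI := laurentModule A
  show ((AddMonoidAlgebra.lift ℤ (Module.End ℤ (Fin m → R)) ℤ)
      ((Units.coeHom _).comp ((zpowersHom _) (matUnitEnd A)))) (AddMonoidAlgebra.single n c) x = _
  rw [AddMonoidAlgebra.lift_single]
  simp only [MonoidHom.comp_apply, LinearMap.smul_apply]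
  rw [zpowersHom_apply]
  rfl

lemma matUnitEnd_pow (i : ℕ) : (matUnitEnd A) ^ i = matUnitEnd (A ^ i) := by
  unfold matUnitEnd
  rw [← map_pow]

lemma matUnitEnd_pow_apply (i : ℕ) (x : Fin m → R) :
    (((matUnitEnd A) ^ (i : ℤ) : (Module.End ℤ (Fin m → R))ˣ) : Module.End ℤ (Fin m → R)) x
      = (A.val ^ i).mulVec x := by
  rw [zpow_natCast, matUnitEnd_pow]
  show ((Matrix.mulVecLin ((A ^ i).val)).restrictScalars ℤ) x = _
  rw [Units.val_pow_eq_pow_val]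
  rfl
end ModLemmas


lemma cert (S : Finset ℕ) (m : ℕ)
    (A : (Matrix (Fin m) (Fin m) (ZinvS S))ˣ)
    (p : ℕ) (hp : p.Prime)
    (w : AlgebraicClosure ℚ → ℝ)
    (h0 : ∀ x, 0 ≤ w x)
    (hm : ∀ x y, w (x * y) = w x * w y)
    (ha : ∀ x y, w (x + y) ≤ max (w x) (w y))
    (hr : ∀ q : ℚ, w (algebraMap ℚ (AlgebraicClosure ℚ) q) = (padicNorm p q : ℝ))
    (heig : ∀ x : AlgebraicClosure ℚ,
      ((A.val.map fun a => algebraMap ℚ (AlgebraicClosure ℚ) (a : ℚ)).charpoly).IsRoot x →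
      w x ≠ 1) :
    ∃ (N : ℤ) (i₀ : ℕ) (c : ℕ → ℤ),
      ¬ (p:ℤ) ∣ N ∧
      (N:ℤ) • A.val ^ i₀ + (p:ℤ) •
        ∑ i ∈ (Finset.range (m+1)).erase i₀, c i • A.val ^ i = 0 := by
  classical
  haveI : Fact p.Prime := ⟨hp⟩
  have h1 : w 1 = 1 := by
    have := hr 1; simpa using this
  have hz : w 0 = 0 := by
    have := hr 0; simpa [padicNorm.zero] using this
  set ρ : ZinvS S →+* ℚ := (ZinvS S).subtype with hρ
  set B : Matrix (Fin m) (Fin m) ℚ := A.val.map ρ with hB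
  set f : ℚ[X] := B.charpoly with hf
  have hmon : f.Monic := B.charpoly_monic
  set φ : ℚ →+* AlgebraicClosure ℚ := algebraMap ℚ (AlgebraicClosure ℚ) with hφ
  have hsp : (f.map φ).Splits := IsAlgClosed.splits (f.map φ)
  set fb := f.map φ with hfbdef
  have hmb : fb.Monic := hmon.map φ
  have hfb : fb = (fb.roots.map fun a => X - C a).prod :=
    hsp.eq_prod_roots_of_monic hmb
  have hcharmap : (A.val.map fun a => φ (a:ℚ)).charpoly = fb := by
    have h2 : (A.val.map fun a => φ (a:ℚ)) = B.map φ := by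
      rw [hB, Matrix.map_map]; rfl
    rw [h2, Matrix.charpoly_map]
  have hroots : ∀ x ∈ fb.roots, w x ≠ 1 := by
    intro x hx
    exact heig x (by rw [hcharmap]; exact isRoot_of_mem_roots hx)
  have hdeg : f.natDegree = m := by
    rw [hf, Matrix.charpoly_natDegree_eq_dim, Fintype.card_fin]
  have hcard : Multiset.card fb.roots = m := by
    rw [← hsp.natDegree_eq_card_roots, hfbdef, natDegree_map, hdeg]
  obtain ⟨hP1, hPeq, hPlt⟩ := coeff_prod_X_sub_C_w w h0 hm ha h1 hz fb.roots hroots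
  set k := Multiset.card (fb.roots.filter (fun a => 1 < w a)) with hk
  set P := ((fb.roots.filter (fun a => 1 < w a)).map w).prod with hP
  rw [← hfb, hcard] at hPeq hPlt
  set i₀ := m - k with hi₀
  have hi₀m : i₀ ≤ m := hi₀ ▸ Nat.sub_le m k
  have hi₀mem : i₀ ∈ Finset.range (m+1) := Finset.mem_range.mpr (Nat.lt_succ_of_le hi₀m)
  -- transfer to padicNorm
  have hwcoeff : ∀ i : ℕ, w (fb.coeff i) = ((padicNorm p (f.coeff i) : ℚ) : ℝ) := by
    intro i
    rw [hfbdef, Polynomial.coeff_map, hr]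
  set c₀ : ℚ := f.coeff i₀ with hc₀
  have hc₀P : ((padicNorm p c₀ : ℚ) : ℝ) = P := by rw [← hwcoeff, hPeq]
  have hc₀ne : c₀ ≠ 0 := by
    intro hcon
    rw [hcon] at hc₀P
    rw [padicNorm.zero] at hc₀P
    push_cast at hc₀P
    linarith
  have hlt : ∀ i : ℕ, i ≠ i₀ → padicNorm p (f.coeff i) < padicNorm p c₀ := by
    intro i hi
    have := hPlt i hi
    rw [hwcoeff] at this
    rw [← hc₀P] at this
    exact_mod_cast this
  set q : ℕ → ℚ := fun i => f.coeff i / c₀ with hq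
  have hq0 : q i₀ = 1 := div_self hc₀ne
  have hqlt : ∀ i : ℕ, i ≠ i₀ → padicNorm p (q i) < 1 := by
    intro i hi
    rw [hq]
    simp only
    rw [padicNorm.div]
    have hpos : (0:ℚ) < padicNorm p c₀ :=
      lt_of_le_of_ne (padicNorm.nonneg _) (Ne.symm (padicNorm.nonzero hc₀ne))
    exact (div_lt_one hpos).mpr (hlt i hi)
  set N : ℤ := ∏ i ∈ Finset.range (m+1), ((q i).den : ℤ) with hN
  have hNdvd : ¬ (p:ℤ) ∣ N := by
    intro hdvd
    obtain ⟨i, hi, hdi⟩ := (Nat.prime_iff_prime_int.mp hp).exists_mem_finset_dvd hdvd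
    rcases eq_or_ne i i₀ with rfl | hne
    · rw [hq0] at hdi
      have hple : (p:ℤ) ≤ 1 := Int.le_of_dvd one_pos (by simpa using hdi)
      have := hp.two_le
      omega
    · exact (padic_num_den hp (q i) (hqlt i hne)).2 hdi
  set z : ℕ → ℤ := fun i => (q i).num * ∏ j ∈ (Finset.range (m+1)).erase i, ((q j).den : ℤ)
    with hzdef
  have hzq : ∀ i ∈ Finset.range (m+1), (z i : ℚ) = (N:ℚ) * q i := by
    intro i hi
    rw [hzdef, hN]
    push_cast
    rw [← Finset.mul_prod_erase _ (fun j => ((q j).den : ℚ)) hi]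
    have hnum : ((q i).num : ℚ) = q i * ((q i).den : ℚ) := by
      exact_mod_cast (Rat.mul_den_eq_num (q i)).symm
    rw [hnum]; ring
  have hzdvd : ∀ i ∈ Finset.range (m+1), i ≠ i₀ → (p:ℤ) ∣ z i := by
    intro i _ hi
    exact Dvd.dvd.mul_right (padic_num_den hp (q i) (hqlt i hi)).1 _
  set c : ℕ → ℤ := fun i => z i / p with hcdef
  have hcz : ∀ i ∈ Finset.range (m+1), i ≠ i₀ → (p:ℤ) * c i = z i := by
    intro i hi hne
    exact Int.mul_ediv_cancel' (hzdvd i hi hne)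
  have hzi₀ : z i₀ = N := by
    have h1 : (z i₀ : ℚ) = (N:ℚ) := by rw [hzq i₀ hi₀mem, hq0, mul_one]
    exact_mod_cast h1
  -- rational matrix identity
  have hCH : aeval B f = 0 := Matrix.aeval_self_charpoly B
  have hsum : ∑ i ∈ Finset.range (m+1), f.coeff i • B ^ i = 0 := by
    rw [← Polynomial.aeval_eq_sum_range' (by omega : f.natDegree < m + 1) B]
    exact hCH
  have hQ : ∑ i ∈ Finset.range (m+1), (z i : ℚ) • B ^ i = 0 := by
    have step : ∑ i ∈ Finset.range (m+1), (z i : ℚ) • B ^ i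
        = ((N:ℚ)/c₀) • ∑ i ∈ Finset.range (m+1), f.coeff i • B ^ i := by
      rw [Finset.smul_sum]
      apply Finset.sum_congr rfl
      intro i hi
      rw [smul_smul, hzq i hi]
      congr 1
      rw [hq]
      field_simp
    rw [step, hsum, smul_zero]
  have hQsplit : (N : ℚ) • B ^ i₀ + ∑ i ∈ (Finset.range (m+1)).erase i₀, (z i : ℚ) • B ^ i = 0 := by
    have hNz : (N:ℚ) • B ^ i₀ = (z i₀ : ℚ) • B ^ i₀ := by rw [hzi₀]
    rw [hNz, Finset.add_sum_erase _ (fun i => (z i : ℚ) • B ^ i) hi₀mem]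
    exact hQ
  refine ⟨N, i₀, c, hNdvd, ?_⟩
  -- transfer to ZinvS via injective map
  have hinj : ∀ M : Matrix (Fin m) (Fin m) (ZinvS S), M.map ρ = 0 → M = 0 := by
    intro M h
    ext i j
    have := congrFun (congrFun h i) j
    rw [hρ] at this
    simp only [Matrix.map_apply, Matrix.zero_apply, Subring.coe_subtype] at this
    simp only [Matrix.zero_apply]
    exact_mod_cast this
  apply hinj
  have hmm : ((N:ℤ) • A.val ^ i₀ + (p:ℤ) •
      ∑ i ∈ (Finset.range (m+1)).erase i₀, c i • A.val ^ i).map ρ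
      = (N:ℤ) • B ^ i₀ + (p:ℤ) • ∑ i ∈ (Finset.range (m+1)).erase i₀, c i • B ^ i := by
    have : B = ρ.mapMatrix A.val := rfl
    rw [this]
    rw [show ((N:ℤ) • A.val ^ i₀ + (p:ℤ) •
      ∑ i ∈ (Finset.range (m+1)).erase i₀, c i • A.val ^ i).map ρ
      = ρ.mapMatrix ((N:ℤ) • A.val ^ i₀ + (p:ℤ) •
      ∑ i ∈ (Finset.range (m+1)).erase i₀, c i • A.val ^ i) from rfl]
    rw [map_add, map_zsmul, map_zsmul, map_pow, map_sum]
    congr 1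
    congr 1
    apply Finset.sum_congr rfl
    intro i _
    rw [map_zsmul, map_pow]
  rw [hmm]
  have hfinal : (N:ℤ) • B ^ i₀ + (p:ℤ) • ∑ i ∈ (Finset.range (m+1)).erase i₀, c i • B ^ i
      = (N : ℚ) • B ^ i₀ + ∑ i ∈ (Finset.range (m+1)).erase i₀, (z i : ℚ) • B ^ i := by
    rw [← Int.cast_smul_eq_zsmul ℚ N]
    congr 1
    rw [← Int.cast_smul_eq_zsmul ℚ (p:ℤ), Finset.smul_sum]
    apply Finset.sum_congr rfl
    intro i hi
    rw [← Int.cast_smul_eq_zsmul ℚ (c i), smul_smul]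
    rw [← hcz i (Finset.mem_of_mem_erase hi) (Finset.ne_of_mem_erase hi)]
    push_cast
    ring_nf
  rw [hfinal, hQsplit]

theorem laurent_finite_and_bounded_p_torsion
    (S : Finset ℕ) (hS : ∀ l ∈ S, l.Prime) (m : ℕ)
    (A : (Matrix (Fin m) (Fin m) (ZinvS S))ˣ)
    (w : ℕ → AlgebraicClosure ℚ → ℝ)
    (hw_nonneg : ∀ l ∈ S, ∀ x, 0 ≤ w l x)
    (hw_mul : ∀ l ∈ S, ∀ x y, w l (x * y) = w l x * w l y)
    (hw_add : ∀ l ∈ S, ∀ x y, w l (x + y) ≤ max (w l x) (w l y))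
    (hw_rat : ∀ l ∈ S, ∀ q : ℚ, w l (algebraMap ℚ (AlgebraicClosure ℚ) q) = (padicNorm l q : ℝ))
    (heig : ∀ l ∈ S, ∀ x : AlgebraicClosure ℚ,
      ((A.val.map fun a => algebraMap ℚ (AlgebraicClosure ℚ) (a : ℚ)).charpoly).IsRoot x →
      w l x ≠ 1) :
    (@Module.Finite (AddMonoidAlgebra ℤ ℤ) (Fin m → ZinvS S) _ _ (laurentModule A)) ∧
    (∀ p ∈ S, ∃ i₀ : ℕ, ∀ i : ℕ, i₀ ≤ i →
      {χ : (Fin m → ZinvS S) →+ AddCircle (1 : ℝ) | p ^ i • χ = 0} =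
      {χ : (Fin m → ZinvS S) →+ AddCircle (1 : ℝ) | p ^ i₀ • χ = 0}) := by
  classical
  letI inst : Module (AddMonoidAlgebra ℤ ℤ) (Fin m → ZinvS S) := laurentModule A
  have hpinv : ∀ p ∈ S, ((p:ℚ)⁻¹) ∈ ZinvS S := fun p hp => Subring.subset_closure ⟨p, hp, rfl⟩
  constructor
  · -- Claim 1 : finiteness
    set e : Fin m → (Fin m → ZinvS S) := fun j => Pi.single j (1 : ZinvS S) with he
    set T : Submodule (AddMonoidAlgebra ℤ ℤ) (Fin m → ZinvS S) :=
      Submodule.span (AddMonoidAlgebra ℤ ℤ) (Set.range e) with hT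
    have hdiv : ∀ p ∈ S, ∃ r : AddMonoidAlgebra ℤ ℤ,
        ∀ x : Fin m → ZinvS S, (p:ℤ) • (r • x) = x := by
      intro p hp
      obtain ⟨N, i₀, c, hN, hMat⟩ := cert S m A p (hS p hp) (w p) (hw_nonneg p hp)
        (hw_mul p hp) (hw_add p hp) (hw_rat p hp) (heig p hp)
      have hpZ : Prime (p:ℤ) := Nat.prime_iff_prime_int.mp (hS p hp)
      have hcop : IsCoprime ((p:ℕ):ℤ) N := (hpZ.coprime_iff_not_dvd).mpr hN
      obtain ⟨a, b, hab⟩ := hcop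
      set E := matUnitEnd A with hE
      set R := (Finset.range (m+1)).erase i₀ with hR
      refine ⟨AddMonoidAlgebra.single 0 a
        - ∑ i ∈ R, AddMonoidAlgebra.single ((i:ℤ) - (i₀:ℤ)) (b * c i), ?_⟩
      intro x
      -- the vector-level matrix identity
      have hVec : (N:ℤ) • (A.val ^ i₀).mulVec x
          + (p:ℤ) • ∑ i ∈ R, (c i) • (A.val ^ i).mulVec x = 0 := by
        set mv : Matrix (Fin m) (Fin m) (ZinvS S) →+ (Fin m → ZinvS S) :=
          AddMonoidHom.mk' (fun M => M.mulVec x) (fun M1 M2 => Matrix.add_mulVec M1 M2 x)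
          with hmv
        have h0 := congrArg mv hMat
        rw [map_add, map_zero, map_zsmul, map_zsmul, map_sum] at h0
        have h1 : ∀ i ∈ R, mv (c i • A.val ^ i) = c i • mv (A.val ^ i) :=
          fun i _ => map_zsmul mv (c i) (A.val ^ i)
        rw [Finset.sum_congr rfl h1] at h0
        simpa [hmv, AddMonoidHom.mk'_apply] using h0
      have hkey : ∑ i ∈ R, ((p:ℤ) * c i) • ((E ^ ((i:ℤ) - (i₀:ℤ))).val x)
          = -((N:ℤ) • x) := by
        have hsplit : ∀ i : ℕ, ((E ^ ((i:ℤ) - (i₀:ℤ))).val : Module.End ℤ (Fin m → ZinvS S))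
            = ((E ^ (-(i₀:ℤ))).val) * ((E ^ (i:ℤ)).val) := by
          intro i
          rw [show (i:ℤ) - (i₀:ℤ) = -(i₀:ℤ) + i by ring, zpow_add, Units.val_mul]
        set L : Module.End ℤ (Fin m → ZinvS S) := (E ^ (-(i₀:ℤ))).val with hL
        have hLE : L ((E ^ ((i₀:ℕ):ℤ)).val x) = x := by
          rw [hL, show (L ((E ^ ((i₀:ℕ):ℤ)).val x)) = ((E ^ (-(i₀:ℤ))).val * (E ^ ((i₀:ℕ):ℤ)).val) x
            from rfl, ← Units.val_mul, ← zpow_add]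
          simp
        calc ∑ i ∈ R, ((p:ℤ) * c i) • ((E ^ ((i:ℤ) - (i₀:ℤ))).val x)
            = ∑ i ∈ R, ((p:ℤ) * c i) • L ((E ^ (i:ℤ)).val x) := by
              refine Finset.sum_congr rfl fun i _ => ?_
              rw [hsplit i]; rfl
          _ = L (∑ i ∈ R, ((p:ℤ) * c i) • ((E ^ (i:ℤ)).val x)) := by
              rw [map_sum]
              exact Finset.sum_congr rfl fun i _ => (map_zsmul L _ _).symm
          _ = L (∑ i ∈ R, ((p:ℤ) * c i) • ((A.val ^ i).mulVec x)) := by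
              congr 1
              exact Finset.sum_congr rfl fun i _ => by rw [matUnitEnd_pow_apply]
          _ = L (-((N:ℤ) • ((A.val ^ i₀).mulVec x))) := by
              congr 1
              have h2 : ∑ i ∈ R, ((p:ℤ) * c i) • ((A.val ^ i).mulVec x)
                  = (p:ℤ) • ∑ i ∈ R, (c i) • ((A.val ^ i).mulVec x) := by
                rw [Finset.smul_sum]
                exact Finset.sum_congr rfl fun i _ => (smul_smul (p:ℤ) (c i) _).symm
              rw [h2]
              exact eq_neg_of_add_eq_zero_right hVec
          _ = -((N:ℤ) • x) := by
              rw [map_neg, map_zsmul]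
              rw [← matUnitEnd_pow_apply A i₀ x, hLE]
      have hract : (AddMonoidAlgebra.single 0 a
            - ∑ i ∈ R, AddMonoidAlgebra.single ((i:ℤ) - (i₀:ℤ)) (b * c i)) • x
          = a • x - ∑ i ∈ R, (b * c i) • ((E ^ ((i:ℤ) - (i₀:ℤ))).val x) := by
        rw [sub_smul, Finset.sum_smul]
        congr 1
        · rw [laurent_single_smul]
          norm_num
        · exact Finset.sum_congr rfl fun i _ => laurent_single_smul A _ _ x
      rw [hract, smul_sub, Finset.smul_sum]
      have hbsum : ∑ i ∈ R, (p:ℤ) • ((b * c i) • ((E ^ ((i:ℤ) - (i₀:ℤ))).val x))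
          = b • ∑ i ∈ R, ((p:ℤ) * c i) • ((E ^ ((i:ℤ) - (i₀:ℤ))).val x) := by
        rw [Finset.smul_sum]
        refine Finset.sum_congr rfl fun i _ => ?_
        rw [smul_smul, smul_smul]
        congr 1
        ring
      rw [hbsum, hkey, smul_smul, smul_neg, smul_smul]
      rw [sub_neg_eq_add, ← add_smul]
      rw [show (p:ℤ) * a + b * N = (1:ℤ) from by linarith [hab]]
      exact one_smul ℤ x
    -- p-divisibility of membership in T
    have hTdiv : ∀ p ∈ S, ∀ y : Fin m → ZinvS S, (p:ℤ) • y ∈ T → y ∈ T := by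
      intro p hp y hy
      obtain ⟨r, hr⟩ := hdiv p hp
      have hp0 : ((p:ℤ):ℚ) ≠ 0 := by
        exact_mod_cast Nat.cast_ne_zero.mpr (hS p hp).pos.ne'
      have hinj : ∀ u v : Fin m → ZinvS S, (p:ℤ) • u = (p:ℤ) • v → u = v := by
        intro u v h
        funext j
        have h2 : ((p:ℤ) • u j : ZinvS S) = (p:ℤ) • v j := by
          have := congrFun h j
          simpa using this
        apply Subtype.ext
        have h3 := congrArg (fun z : ZinvS S => (z : ℚ)) h2
        simp only [coe_zsmul_ZinvS] at h3
        exact mul_left_cancel₀ hp0 h3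
      have hEq : r • ((p:ℤ) • y) = y := hinj _ _ (hr ((p:ℤ) • y))
      rw [← hEq]
      exact T.smul_mem r hy
    have hprodstep : ∀ (s : Finset ℕ), (∀ l ∈ s, l ∈ S) →
        ∀ y : Fin m → ZinvS S, ((∏ l ∈ s, l : ℕ) : ℤ) • y ∈ T → y ∈ T := by
      intro s
      induction s using Finset.induction_on with
      | empty => intro _ y hy; simpa using hy
      | @insert a s ha ih =>
          intro hsub y hy
          rw [Finset.prod_insert ha] at hy
          have hcast : (((a * ∏ l ∈ s, l : ℕ)) : ℤ) • y
              = (a:ℤ) • (((∏ l ∈ s, l : ℕ):ℤ) • y) := by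
            rw [smul_smul]; push_cast; ring_nf
          rw [hcast] at hy
          exact ih (fun l hl => hsub l (Finset.mem_insert_of_mem hl)) y
            (hTdiv a (hsub a (Finset.mem_insert_self a s)) _ hy)
    have hpowK : ∀ (K : ℕ) (y : Fin m → ZinvS S),
        (((∏ l ∈ S, l : ℕ) ^ K : ℕ) : ℤ) • y ∈ T → y ∈ T := by
      intro K
      induction K with
      | zero => intro y hy; simpa using hy
      | succ K ih =>
          intro y hy
          rw [pow_succ] at hy
          have hcast : ((((∏ l ∈ S, l : ℕ) ^ K * (∏ l ∈ S, l : ℕ) : ℕ)) : ℤ) • y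
              = (((∏ l ∈ S, l : ℕ)^K : ℕ):ℤ) • (((∏ l ∈ S, l : ℕ):ℤ) • y) := by
            rw [smul_smul]; push_cast; ring_nf
          rw [hcast] at hy
          exact hprodstep S (fun l hl => hl) y (ih _ hy)
    have hint : ∀ (v : Fin m → ZinvS S), (∀ j, ∃ n : ℤ, ((v j : ℚ)) = (n:ℚ)) → v ∈ T := by
      intro v hv
      choose n hn using hv
      have hrepr : v = ∑ j, (n j) • e j := by
        funext j
        rw [Finset.sum_apply]
        have hterm : ∀ j' ∈ Finset.univ, ((n j' • e j') j : ZinvS S)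
            = if j = j' then (n j : ℤ) • (1 : ZinvS S) else 0 := by
          intro j' _
          rw [he]
          simp only [Pi.smul_apply, Pi.single_apply]
          split_ifs with hjj
          · subst hjj; rfl
          · simp
        rw [Finset.sum_congr rfl hterm, Finset.sum_ite_eq Finset.univ j
          (fun _ => (n j : ℤ) • (1 : ZinvS S)), if_pos (Finset.mem_univ j)]
        apply Subtype.ext
        rw [coe_zsmul_ZinvS]
        simpa using hn j
      rw [hrepr]
      exact Submodule.sum_mem T fun j _ =>
        AddSubgroup.zsmul_mem T.toAddSubgroup (Submodule.subset_span (Set.mem_range_self j)) (n j)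
    have hTop : T = ⊤ := by
      rw [eq_top_iff]
      intro v _
      have hstr := fun j => ZinvS_struct S hS ((v j : ℚ)) (v j).2
      choose n K hnK using hstr
      set Km := Finset.univ.sup K with hKm
      apply hpowK Km
      apply hint
      intro j
      refine ⟨n j * ((∏ l ∈ S, l : ℕ):ℤ) ^ (Km - K j), ?_⟩
      have hj : (((((∏ l ∈ S, l : ℕ) ^ Km : ℕ):ℤ) • v) j : ℚ)
          = (v j : ℚ) * ((∏ l ∈ S, (l:ℕ) : ℕ):ℚ) ^ Km := by
        simp only [Pi.smul_apply]
        rw [coe_zsmul_ZinvS]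
        push_cast
        ring
      rw [hj]
      have hKle : K j ≤ Km := Finset.le_sup (Finset.mem_univ j)
      have hsplitpow : ((∏ l ∈ S, (l:ℕ) : ℕ):ℚ) ^ Km
          = ((∏ l ∈ S, (l:ℕ) : ℕ):ℚ) ^ (K j) * ((∏ l ∈ S, (l:ℕ) : ℕ):ℚ) ^ (Km - K j) := by
        rw [← pow_add]
        congr 1
        omega
      rw [hsplitpow, ← mul_assoc, hnK j]
      push_cast
      ring
    exact ⟨⟨Finset.univ.image e, by
      rw [Finset.coe_image, Finset.coe_univ, Set.image_univ]; exact hTop⟩⟩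
  · -- Claim 2 : bounded p-torsion
    intro p hp
    refine ⟨0, fun i _ => ?_⟩
    have hp0 : (p:ℚ) ≠ 0 := Nat.cast_ne_zero.mpr (hS p hp).pos.ne'
    have hdiv : ∀ x : Fin m → ZinvS S, ∃ y : Fin m → ZinvS S, p ^ i • y = x := by
      intro x
      refine ⟨fun j => x j * (⟨(p:ℚ)⁻¹, hpinv p hp⟩ : ZinvS S) ^ i, ?_⟩
      funext j
      apply Subtype.ext
      show ((p ^ i • (x j * (⟨(p:ℚ)⁻¹, hpinv p hp⟩ : ZinvS S) ^ i) : ZinvS S) : ℚ) = (x j : ℚ)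
      push_cast
      rw [nsmul_eq_mul]
      push_cast
      rw [mul_left_comm, ← mul_pow, mul_inv_cancel₀ hp0, one_pow, mul_one]
    ext χ
    simp only [Set.mem_setOf_eq, pow_zero, one_smul]
    constructor
    · intro h
      refine AddMonoidHom.ext fun x => ?_
      rw [AddMonoidHom.zero_apply]
      obtain ⟨y, hy⟩ := hdiv x
      have h1 : (p ^ i • χ) y = 0 := by rw [h]; rfl
      rw [AddMonoidHom.smul_apply] at h1
      calc χ x = χ (p ^ i • y) := by rw [hy]
      _ = p ^ i • χ y := by rw [map_nsmul]
      _ = 0 := h1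
    · intro h; rw [h]; simp
end

section
/- Let S be a finite set of primes and A ∈ M_m(ℤ[1/S]) with det A ≠ 0. Then the quotient group ℤ[1/S]^m / A·ℤ[1/S]^m is finite of cardinality (∏_{l ∈ S} |det A|_l) · |det A|, where |·|_l is the l-adic absolute value with |l|_l = l^{-1} and |·| is the ordinary (archimedean) absolute value. -/
namespace Stmt8

variable (S : Finset ℕ)

/-- The product of the primes in S. -/
def NS : ℕ := ∏ l ∈ S, l

theorem NS_pos (hS : ∀ l ∈ S, l.Prime) : 0 < NS S :=
  Finset.prod_pos fun l hl => (hS l hl).pos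

theorem inv_mem (l : ℕ) (hl : l ∈ S) : ((l : ℚ))⁻¹ ∈ ZinvS S :=
  Subring.subset_closure ⟨l, hl, rfl⟩

theorem inv_NS_mem : ((NS S : ℚ))⁻¹ ∈ ZinvS S := by
  rw [NS, Nat.cast_prod, ← Finset.prod_inv_distrib]
  exact Subring.prod_mem _ fun l hl => inv_mem S l hl

/-- c / N^k is in the ring. -/
theorem div_pow_mem (c : ℤ) (k : ℕ) : ((c : ℚ) / ((NS S : ℚ)) ^ k) ∈ ZinvS S := by
  rw [div_eq_mul_inv, ← inv_pow]
  exact mul_mem (intCast_mem _ c) (pow_mem (inv_NS_mem S) k)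

/-- every element has the form c / N^k : clearing denominators. -/
theorem exists_clear (x : ℚ) (hx : x ∈ ZinvS S) :
    ∃ (c : ℤ) (k : ℕ), x * ((NS S : ℚ)) ^ k = c := by
  induction hx using Subring.closure_induction with
  | mem y hy =>
    obtain ⟨l, hl, rfl⟩ := hy
    by_cases h0 : l = 0
    · exact ⟨0, 0, by simp [h0]⟩
    · refine ⟨(∏ l' ∈ S.erase l, l' : ℕ), 1, ?_⟩
      have : (NS S : ℚ) = (l : ℚ) * (∏ l' ∈ S.erase l, l' : ℕ) := by
        rw [NS, ← Finset.mul_prod_erase S _ hl]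
        push_cast; ring
      rw [pow_one, this, ← mul_assoc, inv_mul_cancel₀ (by exact_mod_cast h0), one_mul]
      push_cast; ring
  | zero => exact ⟨0, 0, by simp⟩
  | one => exact ⟨1, 0, by simp⟩
  | add x y hx hy ihx ihy =>
    obtain ⟨c1, k1, h1⟩ := ihx
    obtain ⟨c2, k2, h2⟩ := ihy
    refine ⟨c1 * (NS S : ℤ) ^ k2 + c2 * (NS S : ℤ) ^ k1, k1 + k2, ?_⟩
    push_cast
    rw [pow_add]
    linear_combination ((NS S:ℚ)^k2) * h1 + ((NS S:ℚ)^k1) * h2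
  | neg x hx ih =>
    obtain ⟨c, k, h⟩ := ih
    exact ⟨-c, k, by push_cast; rw [neg_mul, h]⟩
  | mul x y hx hy ihx ihy =>
    obtain ⟨c1, k1, h1⟩ := ihx
    obtain ⟨c2, k2, h2⟩ := ihy
    refine ⟨c1 * c2, k1 + k2, ?_⟩
    push_cast
    rw [pow_add]
    linear_combination (y * (NS S:ℚ)^k2) * h1 + (c1:ℚ) * h2

theorem exists_clear' (x : ZinvS S) :
    ∃ (c : ℤ) (k : ℕ), ((x : ℚ)) * ((NS S : ℚ)) ^ k = c :=
  exists_clear S x x.2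

theorem isUnit_of_mem (l : ℕ) (hl : l ∈ S) (h0 : l ≠ 0) : IsUnit ((l : ℕ) : ZinvS S) := by
  refine isUnit_iff_exists_inv.mpr ⟨⟨((l:ℚ))⁻¹, inv_mem S l hl⟩, ?_⟩
  ext
  push_cast
  exact mul_inv_cancel₀ (by exact_mod_cast h0)

theorem isUnit_NS (hS : ∀ l ∈ S, l.Prime) : IsUnit ((NS S : ℕ) : ZinvS S) := by
  rw [NS, Nat.cast_prod]
  exact Finset.prod_induction _ IsUnit (fun _ _ => IsUnit.mul) isUnit_one
    (fun l hl => isUnit_of_mem S l hl (hS l hl).ne_zero)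

theorem NS_pow_ne_zero (hS : ∀ l ∈ S, l.Prime) (k : ℕ) :
    (((NS S : ℕ) : ZinvS S)) ^ k ≠ 0 :=
  ((isUnit_NS S hS).pow k).ne_zero

open Ideal in
theorem pid (hS : ∀ l ∈ S, l.Prime) : IsPrincipalIdealRing (ZinvS S) := by
  constructor
  intro I
  set J : Ideal ℤ := I.comap (Int.castRingHom (ZinvS S)) with hJ
  obtain ⟨d, hd⟩ := (IsPrincipalIdealRing.principal J).principal
  refine ⟨⟨(d : ZinvS S), ?_⟩⟩
  apply le_antisymm
  · intro x hx
    obtain ⟨c, k, hck⟩ := exists_clear' S x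
    have hcI : ((c : ℤ) : ZinvS S) ∈ I := by
      have : ((c : ℤ) : ZinvS S) = x * (((NS S : ℕ) : ZinvS S)) ^ k := by
        ext; push_cast; exact hck.symm
      rw [this]
      exact I.mul_mem_right _ hx
    have hcJ : c ∈ J := by simpa [hJ] using hcI
    rw [hd] at hcJ
    obtain ⟨e, he⟩ := Ideal.mem_span_singleton.mp hcJ
    rw [Submodule.mem_span_singleton]
    refine ⟨⟨(e : ℚ) / ((NS S : ℚ)) ^ k, div_pow_mem S e k⟩, ?_⟩
    have hN : ((NS S : ℚ)) ^ k ≠ 0 := by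
      have := (NS_pos S hS).ne'
      positivity
    ext
    push_cast
    rw [smul_eq_mul]
    push_cast
    field_simp
    have he' : (c:ℚ) = (d:ℚ) * (e:ℚ) := by exact_mod_cast he
    linear_combination - he' - hck
  · rw [Submodule.span_le, Set.singleton_subset_iff]
    have : d ∈ J := hd ▸ Ideal.mem_span_singleton_self d
    simpa [hJ] using this

open Ideal in
theorem card_quot (hS : ∀ l ∈ S, l.Prime) (d : ℕ) (hd : 0 < d)
    (hcop : ∀ l ∈ S, ¬ l ∣ d) :
    Nat.card ((ZinvS S) ⧸ Ideal.span {((d : ℕ) : ZinvS S)}) = d := by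
  have hcopN : Nat.Coprime d (NS S) :=
    Nat.Coprime.prod_right fun l hl =>
      (((hS l hl).coprime_iff_not_dvd).mpr (hcop l hl)).symm
  have hcopI : ∀ k : ℕ, IsCoprime (d : ℤ) (((NS S : ℤ)) ^ k) := fun k =>
    (Int.isCoprime_iff_gcd_eq_one.mpr (by
      rw [Int.gcd_natCast_natCast]; exact hcopN)).pow_right
  set φ : ℤ →+* (ZinvS S) ⧸ Ideal.span {((d : ℕ) : ZinvS S)} :=
    (Ideal.Quotient.mk _).comp (Int.castRingHom (ZinvS S)) with hφ
  have hNq : ∀ k : ℕ, ((NS S : ℚ)) ^ k ≠ 0 := fun k => by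
    have := (NS_pos S hS).ne'
    positivity
  have hsurj : Function.Surjective φ := by
    intro q
    obtain ⟨x, rfl⟩ := Ideal.Quotient.mk_surjective q
    obtain ⟨c, k, hck⟩ := exists_clear' S x
    obtain ⟨u, v, huv⟩ := hcopI k
    refine ⟨c * v, ?_⟩
    rw [hφ, RingHom.comp_apply]
    rw [Ideal.Quotient.eq]
    rw [Ideal.mem_span_singleton]
    refine ⟨⟨(((-(c * u)) : ℤ) : ℚ) / ((NS S : ℚ)) ^ k, div_pow_mem S _ k⟩, ?_⟩
    ext
    simp only [Int.coe_castRingHom]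
    push_cast
    have huv' : (u:ℚ) * d + v * (NS S:ℚ)^k = 1 := by exact_mod_cast congrArg (Int.cast : ℤ → ℚ) huv
    rw [← mul_div_assoc, eq_div_iff (hNq k)]
    linear_combination (c:ℚ) * huv' - hck
  have hker : RingHom.ker φ = Ideal.span {(d : ℤ)} := by
    ext a
    rw [RingHom.mem_ker, hφ, RingHom.comp_apply, Ideal.Quotient.eq_zero_iff_mem,
      Ideal.mem_span_singleton, Ideal.mem_span_singleton]
    constructor
    · rintro ⟨r, hr⟩
      obtain ⟨c, k, hck⟩ := exists_clear' S r
      have hq : (a : ℚ) * ((NS S:ℚ))^k = (d : ℚ) * (c : ℚ) := by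
        have : ((a : ℤ) : ℚ) = (d : ℚ) * (r : ℚ) := by
          have := congrArg (fun z : ZinvS S => (z : ℚ)) hr
          push_cast at this
          exact this
        rw [this, mul_assoc, hck]
      have hz : (a : ℤ) * ((NS S : ℤ))^k = (d : ℤ) * c := by exact_mod_cast hq
      have : (d : ℤ) ∣ a * ((NS S : ℤ))^k := ⟨c, hz⟩
      exact (hcopI k).dvd_of_dvd_mul_right this
    · rintro ⟨e, rfl⟩
      refine ⟨((e : ℤ) : ZinvS S), ?_⟩
      ext
      simp only [Int.coe_castRingHom]
      push_cast
      ring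
  calc Nat.card ((ZinvS S) ⧸ Ideal.span {((d : ℕ) : ZinvS S)})
      = Nat.card (ℤ ⧸ RingHom.ker φ) :=
        (Nat.card_congr (RingHom.quotientKerEquivOfSurjective hsurj).toEquiv).symm
    _ = Nat.card (ZMod d) := by
        rw [hker]
        exact Nat.card_congr (Int.quotientSpanNatEquivZMod d).toEquiv
    _ = d := Nat.card_zmod d

/-- The product formula function: F q = (∏_{l∈S} l^{-v_l(q)}) * |q|. -/
noncomputable def F (S : Finset ℕ) (q : ℚ) : ℝ :=
  (∏ l ∈ S, (l : ℝ) ^ (-(padicValRat l q))) * |(q : ℝ)|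

variable {S} in
theorem F_mul (hS : ∀ l ∈ S, l.Prime) {q r : ℚ} (hq : q ≠ 0) (hr : r ≠ 0) :
    F S (q * r) = F S q * F S r := by
  unfold F
  have h : (∏ l ∈ S, (l:ℝ) ^ (-(padicValRat l (q*r)))) =
      ∏ l ∈ S, ((l:ℝ) ^ (-(padicValRat l q)) * (l:ℝ) ^ (-(padicValRat l r))) := by
    refine Finset.prod_congr rfl fun l hl => ?_
    haveI := Fact.mk (hS l hl)
    have hl0 : (l:ℝ) ≠ 0 := Nat.cast_ne_zero.mpr (hS l hl).ne_zero
    rw [padicValRat.mul hq hr, neg_add, zpow_add₀ hl0]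
  rw [h, Finset.prod_mul_distrib, Rat.cast_mul, abs_mul]
  ring

theorem F_one : F S 1 = 1 := by
  unfold F
  simp [padicValRat.one]

variable {S} in
theorem F_neg (q : ℚ) : F S (-q) = F S q := by
  unfold F
  simp [padicValRat.neg]

variable {S} in
theorem F_ne_zero (hS : ∀ l ∈ S, l.Prime) {q : ℚ} (hq : q ≠ 0) : F S q ≠ 0 := by
  unfold F
  apply mul_ne_zero
  · apply Finset.prod_ne_zero_iff.mpr
    intro l hl
    exact zpow_ne_zero _ (Nat.cast_ne_zero.mpr (hS l hl).ne_zero)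
  · simpa using hq

variable {S} in
theorem F_inv (hS : ∀ l ∈ S, l.Prime) {q : ℚ} (hq : q ≠ 0) :
    F S q⁻¹ = (F S q)⁻¹ := by
  have h1 := F_mul hS hq (inv_ne_zero hq)
  rw [mul_inv_cancel₀ hq, F_one] at h1
  exact eq_inv_of_mul_eq_one_left (by rw [mul_comm]; exact h1.symm)

variable {S} in
theorem F_nat (hS : ∀ l ∈ S, l.Prime) (d : ℕ) (hcop : ∀ l ∈ S, ¬ l ∣ d) :
    F S (d : ℚ) = d := by
  unfold F
  have h : ∀ l ∈ S, (l:ℝ) ^ (-(padicValRat l (d:ℚ))) = 1 := fun l hl => by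
    rw [padicValRat.of_nat, padicValNat.eq_zero_of_not_dvd (hcop l hl)]
    simp
  rw [Finset.prod_congr rfl h]
  simp

variable {S} in
theorem F_prime (hS : ∀ l ∈ S, l.Prime) {l : ℕ} (hl : l ∈ S) : F S (l : ℚ) = 1 := by
  unfold F
  have hlp := hS l hl
  have hl0 : (l:ℝ) ≠ 0 := Nat.cast_ne_zero.mpr hlp.ne_zero
  rw [Finset.prod_eq_single_of_mem l hl (fun b hb hne => by
    rw [padicValRat.of_nat, padicValNat.eq_zero_of_not_dvd
      (fun hdvd => hne ((Nat.prime_dvd_prime_iff_eq (hS b hb) hlp).mp hdvd))]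
    simp)]
  haveI := Fact.mk hlp
  rw [padicValRat.self hlp.one_lt]
  rw [show ((l:ℚ):ℝ) = (l:ℝ) by push_cast; ring]
  rw [abs_of_nonneg (by positivity)]
  rw [zpow_neg, zpow_one]
  field_simp

variable {S} in
theorem F_closure (hS : ∀ l ∈ S, l.Prime) {s : ℕ}
    (h : s ∈ Submonoid.closure (S : Set ℕ)) : 0 < s ∧ F S (s : ℚ) = 1 := by
  induction h using Submonoid.closure_induction with
  | mem x hx => exact ⟨(hS x hx).pos, F_prime hS hx⟩
  | one => exact ⟨one_pos, by rw [Nat.cast_one]; exact F_one S⟩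
  | mul x y hx hy ihx ihy =>
    refine ⟨Nat.mul_pos ihx.1 ihy.1, ?_⟩
    rw [Nat.cast_mul, F_mul hS (by exact_mod_cast ihx.1.ne') (by exact_mod_cast ihy.1.ne'),
      ihx.2, ihy.2, one_mul]

variable {S} in
theorem isUnit_closure (hS : ∀ l ∈ S, l.Prime) {s : ℕ}
    (h : s ∈ Submonoid.closure (S : Set ℕ)) : IsUnit ((s : ℕ) : ZinvS S) := by
  induction h using Submonoid.closure_induction with
  | mem x hx => exact isUnit_of_mem S x hx (hS x hx).ne_zero
  | one => simp
  | mul x y hx hy ihx ihy => rw [Nat.cast_mul]; exact ihx.mul ihy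

variable {S} in
theorem mem_closure_of_dvd (hS : ∀ l ∈ S, l.Prime) :
    ∀ n : ℕ, 0 < n → ∀ K : ℕ, n ∣ (NS S) ^ K → n ∈ Submonoid.closure (S : Set ℕ) := by
  intro n
  induction n using Nat.strong_induction_on with
  | _ n ih =>
    intro hn K hdvd
    rcases eq_or_ne n 1 with rfl | hn1
    · exact one_mem _
    · have hp : n.minFac.Prime := Nat.minFac_prime hn1
      have hpd : n.minFac ∣ n := Nat.minFac_dvd n
      have hpN : n.minFac ∣ NS S := hp.dvd_of_dvd_pow (hpd.trans hdvd)
      obtain ⟨l, hl, hpl⟩ := hp.prime.exists_mem_finset_dvd hpN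
      have hpeq : n.minFac = l := (Nat.prime_dvd_prime_iff_eq hp (hS l hl)).mp hpl
      have hpS : n.minFac ∈ S := hpeq ▸ hl
      have hdiv : n / n.minFac ∣ (NS S) ^ K := (Nat.div_dvd_of_dvd hpd).trans hdvd
      have hlt : n / n.minFac < n := Nat.div_lt_self hn hp.one_lt
      have hpos : 0 < n / n.minFac := Nat.div_pos (Nat.minFac_le hn) hp.pos
      have := ih _ hlt hpos K hdiv
      have hmem : n.minFac ∈ Submonoid.closure (S : Set ℕ) := Submonoid.subset_closure hpS
      have heq : n = n.minFac * (n / n.minFac) := (Nat.mul_div_cancel' hpd).symm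
      rw [heq]
      exact mul_mem hmem this

variable {S} in
theorem coe_q_ne_zero {x : ZinvS S} (hx : x ≠ 0) : ((x : ℚ)) ≠ 0 := by
  intro h
  apply hx
  ext
  simpa using h

variable {S} in
theorem unit_repr (hS : ∀ l ∈ S, l.Prime) (u : (ZinvS S)ˣ) :
    ∃ (s t : ℕ), s ∈ Submonoid.closure (S : Set ℕ) ∧ t ∈ Submonoid.closure (S : Set ℕ) ∧
      0 < s ∧ 0 < t ∧
      (((u : ZinvS S) : ℚ) = (s : ℚ) / t ∨ ((u : ZinvS S) : ℚ) = -((s : ℚ) / t)) := by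
  obtain ⟨a, k1, h1⟩ := exists_clear' S (u : ZinvS S)
  obtain ⟨b, k2, h2⟩ := exists_clear' S ((u⁻¹ : (ZinvS S)ˣ) : ZinvS S)
  have hNpos := NS_pos S hS
  have hN0 : ((NS S : ℚ)) ≠ 0 := Nat.cast_ne_zero.mpr hNpos.ne'
  have hmulq : (((u : ZinvS S) : ℚ)) * (((u⁻¹ : (ZinvS S)ˣ) : ZinvS S) : ℚ) = 1 := by
    have : ((u : ZinvS S) * ((u⁻¹ : (ZinvS S)ˣ) : ZinvS S)) = 1 := by
      rw [← Units.val_mul, mul_inv_cancel, Units.val_one]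
    exact_mod_cast congrArg (fun z : ZinvS S => (z : ℚ)) this
  have hab : (a : ℚ) * b = ((NS S : ℚ)) ^ (k1 + k2) := by
    rw [← h1, ← h2, pow_add]
    linear_combination ((NS S:ℚ)^k1 * (NS S:ℚ)^k2) * hmulq
  have habz : a * b = ((NS S : ℤ)) ^ (k1 + k2) := by exact_mod_cast hab
  have ha0 : a ≠ 0 := by
    rintro rfl
    rw [Int.zero_mul] at habz
    have := pow_ne_zero (k1+k2) (Int.natCast_ne_zero.mpr hNpos.ne' : (NS S : ℤ) ≠ 0)
    exact this habz.symm
  have hdvd : a.natAbs ∣ (NS S) ^ (k1 + k2) := by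
    have : a ∣ ((NS S : ℤ)) ^ (k1 + k2) := ⟨b, habz.symm⟩
    have h2' := Int.natAbs_dvd_natAbs.mpr this
    simpa [Int.natAbs_pow] using h2'
  refine ⟨a.natAbs, (NS S) ^ k1,
    mem_closure_of_dvd hS a.natAbs (Int.natAbs_pos.mpr ha0) _ hdvd,
    pow_mem (Submonoid.prod_mem _ fun l hl => Submonoid.subset_closure hl) k1,
    Int.natAbs_pos.mpr ha0, pow_pos hNpos k1, ?_⟩
  have hu : ((u : ZinvS S) : ℚ) = (a : ℚ) / ((NS S : ℚ)) ^ k1 := by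
    rw [eq_div_iff (pow_ne_zero k1 hN0)]
    exact h1
  rcases Int.natAbs_eq a with h | h
  · left
    rw [hu]
    conv_lhs => rw [h]
    push_cast [Nat.cast_natAbs]
    ring
  · right
    rw [hu]
    conv_lhs => rw [h]
    push_cast [Nat.cast_natAbs]
    ring

variable {S} in
theorem F_unit (hS : ∀ l ∈ S, l.Prime) (u : (ZinvS S)ˣ) :
    F S ((u : ZinvS S) : ℚ) = 1 := by
  have key : ∀ s t : ℕ, s ∈ Submonoid.closure (S : Set ℕ) → t ∈ Submonoid.closure (S : Set ℕ) →
      0 < s → 0 < t → F S ((s : ℚ) / t) = 1 := by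
    intro s t hs ht hs0 ht0
    have hsq : (s : ℚ) ≠ 0 := Nat.cast_ne_zero.mpr hs0.ne'
    have htq : (t : ℚ) ≠ 0 := Nat.cast_ne_zero.mpr ht0.ne'
    rw [div_eq_mul_inv, F_mul hS hsq (inv_ne_zero htq), F_inv hS htq,
      (F_closure hS hs).2, (F_closure hS ht).2]
    norm_num
  obtain ⟨s, t, hs, ht, hs0, ht0, hrep | hrep⟩ := unit_repr hS u
  · rw [hrep]
    exact key s t hs ht hs0 ht0
  · rw [hrep, F_neg]
    exact key s t hs ht hs0 ht0

variable {S} in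
theorem decomp (hS : ∀ l ∈ S, l.Prime) (x : ZinvS S) (hx : x ≠ 0) :
    ∃ (u : (ZinvS S)ˣ) (d : ℕ), 0 < d ∧ (∀ l ∈ S, ¬ l ∣ d) ∧
      x = (u : ZinvS S) * ((d : ℕ) : ZinvS S) := by
  obtain ⟨c, k, hck⟩ := exists_clear' S x
  have hNpos := NS_pos S hS
  have hN0 : ((NS S : ℚ)) ≠ 0 := Nat.cast_ne_zero.mpr hNpos.ne'
  have hNk0 : ((NS S : ℚ)) ^ k ≠ 0 := pow_ne_zero k hN0
  have hc0 : c ≠ 0 := by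
    rintro rfl
    apply coe_q_ne_zero hx
    have : ((x:ℚ)) * ((NS S:ℚ))^k = 0 := by rw [hck]; simp
    exact (mul_eq_zero.mp this).resolve_right hNk0
  set n := c.natAbs with hn
  have hnz : n ≠ 0 := Int.natAbs_ne_zero.mpr hc0
  set f := n.factorization with hf
  set s := ∏ p ∈ f.support.filter (· ∈ S), p ^ f p with hsdef
  set d := ∏ p ∈ f.support.filter (· ∉ S), p ^ f p with hddef
  have hsplit : n = s * d := by
    conv_lhs => rw [← Nat.factorization_prod_pow_eq_self hnz]
    rw [hsdef, hddef, Finsupp.prod]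
    exact (Finset.prod_filter_mul_prod_filter_not f.support (· ∈ S) _).symm
  have hd0 : 0 < d := Finset.prod_pos fun p hp => by
    have hp1 : p ∈ f.support := (Finset.mem_filter.mp hp).1
    have hpp : p.Prime := Nat.prime_of_mem_primeFactors (by
      rwa [Nat.support_factorization] at hp1)
    exact pow_pos hpp.pos _
  have hdcop : ∀ l ∈ S, ¬ l ∣ d := by
    intro l hl hdvd
    obtain ⟨p, hpmem, hpd⟩ := ((hS l hl).prime.dvd_finset_prod_iff _).mp hdvd
    obtain ⟨hpsupp, hpS⟩ := Finset.mem_filter.mp hpmem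
    have hpp : p.Prime := Nat.prime_of_mem_primeFactors (by rwa [Nat.support_factorization] at hpsupp)
    have : l = p := (Nat.prime_dvd_prime_iff_eq (hS l hl) hpp).mp ((hS l hl).dvd_of_dvd_pow hpd)
    exact hpS (this ▸ hl)
  have hscl : s ∈ Submonoid.closure (S : Set ℕ) := by
    apply Submonoid.prod_mem
    intro p hp
    exact pow_mem (Submonoid.subset_closure (Finset.mem_filter.mp hp).2) _
  -- the unit y = c.sign * s / N^k
  set y : ZinvS S := ⟨((c.sign * (s : ℤ) : ℤ) : ℚ) / ((NS S : ℚ)) ^ k, div_pow_mem S _ k⟩ with hy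
  have hyunit : IsUnit y := by
    have hmul : y * (((NS S : ℕ) : ZinvS S)) ^ k = ((c.sign * (s : ℤ) : ℤ) : ZinvS S) := by
      ext
      push_cast [hy]
      field_simp
    have : IsUnit (((c.sign * (s : ℤ) : ℤ) : ZinvS S)) := by
      have hsign : IsUnit ((c.sign : ℤ) : ZinvS S) := by
        rcases lt_trichotomy c 0 with h | h | h
        · rw [Int.sign_eq_neg_one_iff_neg.mpr h]
          rw [show (((-1 : ℤ)) : ZinvS S) = -1 by push_cast; ring]
          exact isUnit_one.neg
        · exact absurd h hc0
        · rw [Int.sign_eq_one_iff_pos.mpr h]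
          rw [show ((1 : ℤ) : ZinvS S) = 1 by push_cast; ring]
          exact isUnit_one
      have hsu : IsUnit ((s : ℤ) : ZinvS S) := by
        have := isUnit_closure hS hscl
        have hcast : (((s : ℕ) : ZinvS S)) = (((s : ℤ) : ZinvS S)) := by ext; push_cast; ring
        rwa [hcast] at this
      rw [show ((c.sign * (s : ℤ) : ℤ) : ZinvS S) = ((c.sign : ℤ) : ZinvS S) * ((s : ℤ) : ZinvS S)
        by ext; push_cast; ring]
      exact hsign.mul hsu
    rw [← hmul] at this
    exact isUnit_of_mul_isUnit_left this
  refine ⟨hyunit.unit, d, hd0, hdcop, ?_⟩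
  rw [IsUnit.unit_spec]
  ext
  push_cast [hy]
  rw [div_mul_eq_mul_div, eq_div_iff hNk0]
  have hcs : (c : ℚ) = (c.sign : ℚ) * (s : ℚ) * (d : ℚ) := by
    have h2 : (n : ℤ) = (s : ℤ) * d := by exact_mod_cast hsplit
    have h3 : (c.sign * ((s : ℤ) * d) : ℤ) = c := by rw [← h2]; exact Int.sign_mul_natAbs c
    calc (c : ℚ) = ((c.sign * ((s : ℤ) * d) : ℤ) : ℚ) := by rw [h3]
      _ = _ := by push_cast; ring
  linear_combination hck + hcs

end Stmt8


/-!
STATEMENT 8: Let S be a finite set of primes and A ∈ M_m(ℤ[1/S]) with det A ≠ 0.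
Then ℤ[1/S]^m / A·ℤ[1/S]^m is finite of cardinality
(∏_{l ∈ S} |det A|_l) · |det A|, where |q|_l = l^{-v_l(q)} is the l-adic absolute
value and |·| the archimedean one.
-/
set_option maxHeartbeats 1000000 in
set_option synthInstance.maxHeartbeats 400000 in
theorem card_quotient_by_matrix_image
    (S : Finset ℕ) (hS : ∀ l ∈ S, l.Prime) (m : ℕ)
    (A : Matrix (Fin m) (Fin m) (ZinvS S)) (hA : A.det ≠ 0) :
    Finite ((Fin m → ZinvS S) ⧸ LinearMap.range A.mulVecLin) ∧
    (Nat.card ((Fin m → ZinvS S) ⧸ LinearMap.range A.mulVecLin) : ℝ) =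
      (∏ l ∈ S, (l : ℝ) ^ (-(padicValRat l (A.det : ℚ)))) * |((A.det : ℚ) : ℝ)| := by
  classical
  haveI : IsPrincipalIdealRing (ZinvS S) := Stmt8.pid S hS
  have hinj : Function.Injective A.mulVecLin := by
    rw [← LinearMap.ker_eq_bot, Matrix.ker_mulVecLin_eq_bot_iff]
    intro v hv
    by_contra hne
    exact hA ((Matrix.exists_mulVec_eq_zero_iff).mp ⟨v, hne, hv⟩)
  set N := LinearMap.range A.mulVecLin with hNdef
  obtain ⟨n, snf⟩ := Submodule.smithNormalForm (Pi.basisFun (ZinvS S) (Fin m)) N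
  have hnm : n = m := by
    let bN' : Module.Basis (Fin m) (ZinvS S) N :=
      (Pi.basisFun (ZinvS S) (Fin m)).map (LinearEquiv.ofInjective A.mulVecLin hinj)
    have e : Fin n ≃ Fin m := snf.bN.indexEquiv bN'
    simpa using Fintype.card_congr e
  subst hnm
  have ha0 : ∀ i, snf.a i ≠ 0 := by
    intro i h
    have h2 := snf.snf i
    rw [h, zero_smul] at h2
    exact snf.bN.ne_zero i (ZeroMemClass.coe_eq_zero.mp h2)
  choose u d hd0 hdcop had using fun i => Stmt8.decomp hS (snf.a i) (ha0 i)
  set D : ℕ := ∏ i, d i with hD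
  have hD0 : 0 < D := Finset.prod_pos fun i _ => hd0 i
  have hDcop : ∀ l ∈ S, ¬ l ∣ D := by
    intro l hl hdvd
    obtain ⟨i, _, hdi⟩ := ((hS l hl).prime.dvd_finset_prod_iff _).mp hdvd
    exact hdcop i l hl hdi
  -- cardinality of the quotient
  have hcard : Nat.card ((Fin n → ZinvS S) ⧸ N) = D := by
    have hidx := snf.toAddSubgroup_index_eq_pow_mul_prod
    have h1 : Nat.card ((Fin n → ZinvS S) ⧸ N) = N.toAddSubgroup.index := rfl
    rw [h1, hidx, Fintype.card_fin, Nat.sub_self, pow_zero, one_mul, hD]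
    refine Finset.prod_congr rfl fun i _ => ?_
    have hassoc : Associated (snf.a i) ((d i : ℕ) : ZinvS S) :=
      ⟨(u i)⁻¹, by rw [had i, mul_comm ((u i : ZinvS S)), mul_assoc, Units.mul_inv, mul_one]⟩
    have hspan : Ideal.span {snf.a i} = Ideal.span {((d i : ℕ) : ZinvS S)} :=
      Ideal.span_singleton_eq_span_singleton.mpr hassoc
    have h2 : (Submodule.toAddSubgroup (Ideal.span {snf.a i})).index
        = Nat.card ((ZinvS S) ⧸ Ideal.span {((d i : ℕ) : ZinvS S)}) := by rw [hspan]; rfl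
    rw [h2, Stmt8.card_quot S hS (d i) (hd0 i) (fun l hl => hdcop i l hl)]
  have hfin : Finite ((Fin n → ZinvS S) ⧸ N) :=
    Nat.finite_of_card_ne_zero (by rw [hcard]; exact hD0.ne')
  -- determinant relation
  set β : (Fin n → ZinvS S) ≃ₗ[ZinvS S] N := snf.bM.equiv snf.bN (Equiv.refl _) with hβdef
  set φ : (Fin n → ZinvS S) →ₗ[ZinvS S] (Fin n → ZinvS S) :=
    N.subtype ∘ₗ (β : (Fin n → ZinvS S) →ₗ[ZinvS S] N) with hφdef
  set g : (Fin n → ZinvS S) ≃ₗ[ZinvS S] (Fin n → ZinvS S) :=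
    (LinearEquiv.ofInjective A.mulVecLin hinj).trans β.symm with hgdef
  have hcomp : A.mulVecLin = φ ∘ₗ (g : (Fin n → ZinvS S) →ₗ[ZinvS S] (Fin n → ZinvS S)) := by
    apply LinearMap.ext
    intro x
    simp [hφdef, hgdef, LinearMap.comp_apply, LinearEquiv.ofInjective_apply]
  set σ : Equiv.Perm (Fin n) :=
    Equiv.ofBijective snf.f ((Finite.injective_iff_bijective).mp snf.f.injective) with hσdef
  have hmat : LinearMap.toMatrix snf.bM snf.bM φ = (Matrix.diagonal snf.a).submatrix (⇑σ.symm) id := by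
    ext i j
    rw [LinearMap.toMatrix_apply]
    have hφb : φ (snf.bM j) = (snf.bN j : Fin n → ZinvS S) := by
      simp [hφdef, hβdef, Module.Basis.equiv_apply]
    rw [hφb, snf.snf j, map_smul, Module.Basis.repr_self]
    have hσs : σ.symm i = j ↔ snf.f j = i := by
      rw [Equiv.symm_apply_eq, eq_comm]
      simp [hσdef, Equiv.ofBijective_apply]
    by_cases h : snf.f j = i
    · simp [Matrix.submatrix_apply, Matrix.diagonal_apply, hσs.mpr h, h,
        Finsupp.single_apply, Finsupp.smul_apply]
    · have : ¬ (σ.symm i = j) := fun hc => h (hσs.mp hc)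
      simp [Matrix.submatrix_apply, Matrix.diagonal_apply, this, h,
        Finsupp.single_apply, Finsupp.smul_apply]
  have hdetφ : LinearMap.det φ =
      (((Equiv.Perm.sign σ.symm : ℤˣ) : ℤ) : ZinvS S) * ∏ i, snf.a i := by
    rw [← LinearMap.det_toMatrix snf.bM, hmat, Matrix.det_permute σ.symm, Matrix.det_diagonal]
  have hdet1 : LinearMap.det A.mulVecLin = A.det := by
    rw [← Matrix.toLin'_apply', LinearMap.det_toLin']
  have hdet2 : A.det = LinearMap.det φ *
      LinearMap.det (g : (Fin n → ZinvS S) →ₗ[ZinvS S] (Fin n → ZinvS S)) := by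
    rw [← hdet1, hcomp, LinearMap.det_comp]
  have hεu : IsUnit ((((Equiv.Perm.sign σ.symm : ℤˣ) : ℤ) : ZinvS S)) := by
    have := (Units.map (Int.castRingHom (ZinvS S)).toMonoidHom (Equiv.Perm.sign σ.symm)).isUnit
    simpa using this
  have hgu : IsUnit (LinearMap.det (g : (Fin n → ZinvS S) →ₗ[ZinvS S] (Fin n → ZinvS S))) :=
    LinearEquiv.isUnit_det' g
  have huprod : IsUnit (∏ i, (u i : ZinvS S)) :=
    Finset.prod_induction _ IsUnit (fun _ _ => IsUnit.mul) isUnit_one (fun i _ => (u i).isUnit)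
  have hW : IsUnit ((((Equiv.Perm.sign σ.symm : ℤˣ) : ℤ) : ZinvS S) *
      LinearMap.det (g : (Fin n → ZinvS S) →ₗ[ZinvS S] (Fin n → ZinvS S)) *
      ∏ i, (u i : ZinvS S)) := (hεu.mul hgu).mul huprod
  have hprodsplit : (∏ i, snf.a i) = (∏ i, (u i : ZinvS S)) * ((D : ℕ) : ZinvS S) := by
    rw [hD, Nat.cast_prod, ← Finset.prod_mul_distrib]
    exact Finset.prod_congr rfl fun i _ => had i
  have hAdet : A.det = ((((Equiv.Perm.sign σ.symm : ℤˣ) : ℤ) : ZinvS S) *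
      LinearMap.det (g : (Fin n → ZinvS S) →ₗ[ZinvS S] (Fin n → ZinvS S)) *
      ∏ i, (u i : ZinvS S)) * ((D : ℕ) : ZinvS S) := by
    rw [hdet2, hdetφ, hprodsplit]
    ring
  refine ⟨hfin, ?_⟩
  have hq : ((A.det : ZinvS S) : ℚ) = ((hW.unit : ZinvS S) : ℚ) * ((D : ℕ) : ℚ) := by
    rw [IsUnit.unit_spec]
    have hcast := congrArg (fun z : ZinvS S => (z : ℚ)) hAdet
    push_cast at hcast ⊢
    exact hcast
  have hucoe : ((hW.unit : ZinvS S) : ℚ) ≠ 0 := Stmt8.coe_q_ne_zero hW.unit.ne_zero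
  have hDq : ((D : ℕ) : ℚ) ≠ 0 := Nat.cast_ne_zero.mpr hD0.ne'
  rw [hcard]
  show (D : ℝ) = Stmt8.F S ((A.det : ZinvS S) : ℚ)
  rw [hq, Stmt8.F_mul hS hucoe hDq, Stmt8.F_unit hS hW.unit,
    Stmt8.F_nat hS D (fun l hl => hDcop l hl), one_mul]
end
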